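/- Let N ≥ 2 be an integer, z : ℤ/Nℤ → ℂ a function with z(−a) = −z(a) for all a, and let 1 ≤ m,k ≤ N⁻ be row and column indices; put d = gcd(k,N) and N_d = N/d. If d does not divide m, then the (m,k)-entry of the matrix S_N·Z_N is 0. If m = du and k = dv (so that gcd(v, N_d) = 1), then the (m,k)-entry of S_N·Z_N equals d·ẑ_d(t), where t ∈ ℤ/N_dℤ is the unique residue with v·t ≡ u (mod N_d). -/

import Mathlib

/-- The discrete sine matrix `S_N`, of size `N⁻ × N⁻` with `N⁻ = ⌊(N−1)/2⌋`:
its `(m,n)` entry (for `1 ≤ m,n ≤ N⁻`) is `sin(2πmn/N)`. -/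
noncomputable def sinMatrix (N : ℕ) : Matrix (Fin ((N - 1) / 2)) (Fin ((N - 1) / 2)) ℝ :=
  Matrix.of fun m n => Real.sin (2 * Real.pi * ((m : ℕ) + 1) * ((n : ℕ) + 1) / N)

/-- The matrix `Z_N` attached to an odd function `z : ℤ/Nℤ → ℂ`:
its `(i,j)` entry (for `1 ≤ i,j ≤ N⁻`) is `z(ij mod N)`. -/
def ZMat (N : ℕ) (z : ZMod N → ℂ) : Matrix (Fin ((N - 1) / 2)) (Fin ((N - 1) / 2)) ℂ :=
  Matrix.of fun i j => z ((((i : ℕ) + 1) : ZMod N) * (((j : ℕ) + 1) : ZMod N))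

/-- For a divisor `d` of `N` and `t ∈ ℤ/N_dℤ` (`N_d = N/d`),
`ẑ_d(t) = (1/2)·Σ_{r=1}^{N_d} z(dr mod N)·sin(2πtr/N_d)`. -/
noncomputable def zhat (N d : ℕ) (z : ZMod N → ℂ) (t : ZMod (N / d)) : ℂ :=
  (1 / 2 : ℂ) * ∑ r ∈ Finset.Icc 1 (N / d),
    z (((d * r : ℕ) : ZMod N)) *
      (Real.sin (2 * Real.pi * (ZMod.val t) * r / ((N / d : ℕ) : ℝ)) : ℝ)

open Finset Real Complex

lemma sum_sin_eq_zero' (a b : ℝ) (d : ℕ) (h1 : Complex.exp (b * Complex.I) ≠ 1)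
    (h2 : Complex.exp (b * Complex.I) ^ d = 1) :
    ∑ j ∈ Finset.range d, ((Real.sin (a + j * b) : ℝ) : ℂ) = 0 := by
  have hterm : ∀ j : ℕ, ((Real.sin (a + j * b) : ℝ) : ℂ) =
      (Complex.exp (-(a : ℂ) * Complex.I) * (Complex.exp (-(b:ℂ) * Complex.I)) ^ j -
        Complex.exp ((a : ℂ) * Complex.I) * (Complex.exp ((b:ℂ) * Complex.I)) ^ j) *
        Complex.I / 2 := by
    intro j
    rw [Complex.ofReal_sin, Complex.sin]
    push_cast
    rw [← Complex.exp_nat_mul, ← Complex.exp_nat_mul, ← Complex.exp_add, ← Complex.exp_add]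
    ring_nf
  simp only [hterm]
  rw [← Finset.sum_div, ← Finset.sum_mul, Finset.sum_sub_distrib, ← Finset.mul_sum,
    ← Finset.mul_sum]
  have h1' : Complex.exp (-(b:ℂ) * Complex.I) ≠ 1 := by
    rw [neg_mul, Complex.exp_neg]
    simpa using h1
  have h2' : Complex.exp (-(b:ℂ) * Complex.I) ^ d = 1 := by
    rw [neg_mul, Complex.exp_neg, inv_pow, h2, inv_one]
  rw [geom_sum_eq h1', geom_sum_eq h1, h2, h2']
  simp

lemma sum_sin_eq_const (a b : ℝ) (d : ℕ) (h1 : Complex.exp ((b:ℂ) * Complex.I) = 1) :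
    ∑ j ∈ Finset.range d, ((Real.sin (a + j * b) : ℝ) : ℂ) = d * Real.sin a := by
  obtain ⟨n, hn⟩ := Complex.exp_eq_one_iff.mp h1
  have hb : b = n * (2 * π) := by
    have : (b : ℂ) = n * (2 * π) := by
      have h' : (b : ℂ) * Complex.I = ((n : ℂ) * (2 * π)) * Complex.I := by rw [hn]; ring
      exact mul_right_cancel₀ Complex.I_ne_zero h'
    exact_mod_cast this
  have : ∀ j : ℕ, Real.sin (a + j * b) = Real.sin a := by
    intro j
    rw [hb, show a + j * (n * (2*π)) = a + (j * n) * (2 * π) by ring]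
    exact_mod_cast Real.sin_add_int_mul_two_pi a (j * n)
  simp [this]

lemma sin_val_natCast (M : ℕ) [NeZero M] (a : ℕ) :
    Real.sin (2 * π * ((a : ZMod M)).val / M) = Real.sin (2 * π * a / M) := by
  rw [ZMod.val_natCast]
  conv_rhs => rw [← Nat.mod_add_div a M]
  have hM : (M : ℝ) ≠ 0 := Nat.cast_ne_zero.mpr (NeZero.ne M)
  push_cast
  rw [show 2 * π * (↑(a % M) + ↑M * ↑(a / M)) / ↑M
      = 2 * π * ↑(a % M) / ↑M + ↑(a / M) * (2 * π) by field_simp]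
  rw [Real.sin_add_nat_mul_two_pi]

lemma zmod_sum_range {M : ℕ} [NeZero M] (g : ZMod M → ℂ) :
    ∑ s : ZMod M, g s = ∑ i ∈ Finset.range M, g i := by
  refine Finset.sum_nbij' (fun s => ZMod.val s) (fun i => (i : ZMod M)) ?_ ?_ ?_ ?_ ?_
  · intro s _; exact Finset.mem_range.mpr (ZMod.val_lt s)
  · intro i _; exact Finset.mem_univ _
  · intro s _; simp [ZMod.natCast_val, ZMod.cast_id]
  · intro i hi; exact ZMod.val_natCast_of_lt (Finset.mem_range.mp hi)
  · intro s _; rw [ZMod.natCast_val, ZMod.cast_id]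

lemma cast_d_mul (N d Nd : ℕ) (hNd : d * Nd = N) [NeZero Nd] (a : ℕ) :
    ((d * ((a : ZMod Nd)).val : ℕ) : ZMod N) = ((d * a : ℕ) : ZMod N) := by
  rw [ZMod.val_natCast]
  conv_rhs => rw [← Nat.mod_add_div a Nd]
  have : d * (a % Nd + Nd * (a / Nd)) = d * (a % Nd) + N * (a / Nd) := by
    rw [← hNd]; ring
  rw [this]
  push_cast
  simp

/-- Entry structure of `S_N·Z_N` for odd `z`: row/column indices `m,k ∈ {1,…,N⁻}`,
with `d = gcd(k,N)`, the `(m,k)` entry vanishes unless `d ∣ m`, and if `m = du`,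
`k = dv` then it equals `d·ẑ_d(t)` where `t` is the unique residue mod `N_d = N/d`
with `v·t ≡ u (mod N_d)`. -/
theorem sinMatrix_mul_ZMat_apply (N : ℕ) (hN : 2 ≤ N) (z : ZMod N → ℂ)
    (hz : ∀ a : ZMod N, z (-a) = -z a) (m k : Fin ((N - 1) / 2)) :
    (¬ (Nat.gcd ((k : ℕ) + 1) N ∣ ((m : ℕ) + 1)) →
      ((sinMatrix N).map (fun r => (r : ℂ)) * ZMat N z) m k = 0) ∧
    (∀ u v : ℕ, (m : ℕ) + 1 = Nat.gcd ((k : ℕ) + 1) N * u →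
      (k : ℕ) + 1 = Nat.gcd ((k : ℕ) + 1) N * v →
      ∀ t : ZMod (N / Nat.gcd ((k : ℕ) + 1) N),
        (v : ZMod (N / Nat.gcd ((k : ℕ) + 1) N)) * t =
          (u : ZMod (N / Nat.gcd ((k : ℕ) + 1) N)) →
        ((sinMatrix N).map (fun r => (r : ℂ)) * ZMat N z) m k =
          (Nat.gcd ((k : ℕ) + 1) N : ℂ) * zhat N (Nat.gcd ((k : ℕ) + 1) N) z t) := by
  classical
  have hMpos : 0 < (N - 1) / 2 := k.pos
  revert m k
  set M := (N - 1) / 2 with hM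
  intro m k
  have hN3 : 3 ≤ N := by omega
  haveI : NeZero N := ⟨by omega⟩
  set m' := (m : ℕ) + 1 with hm'
  set k' := (k : ℕ) + 1 with hk'
  set d := Nat.gcd k' N with hd
  have hd0 : 0 < d := Nat.gcd_pos_of_pos_right _ (by omega)
  have hdvdN : d ∣ N := Nat.gcd_dvd_right _ _
  have hdvdk : d ∣ k' := Nat.gcd_dvd_left _ _
  set Nd := N / d with hNddef
  have hNd : d * Nd = N := Nat.mul_div_cancel' hdvdN
  have hNd0 : 0 < Nd := Nat.div_pos (Nat.le_of_dvd (by omega) hdvdN) hd0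
  haveI : NeZero Nd := ⟨hNd0.ne'⟩
  have hNne : (N : ℝ) ≠ 0 := Nat.cast_ne_zero.mpr (by omega)
  have hNdne : (Nd : ℝ) ≠ 0 := Nat.cast_ne_zero.mpr hNd0.ne'
  have hdne : (d : ℝ) ≠ 0 := Nat.cast_ne_zero.mpr hd0.ne'
  have hNcast : (N : ℝ) = (d : ℝ) * Nd := by exact_mod_cast hNd.symm
  set f : ℕ → ℂ :=
    fun n => ((Real.sin (2 * Real.pi * m' * n / N) : ℝ) : ℂ) * z ((n * k' : ℕ) : ZMod N)
    with hf
  have hz0 : z 0 = 0 := by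
    have h := hz 0
    rw [neg_zero] at h
    linear_combination (1/2 : ℂ) * h
  -- entry as a half-range sum
  have entry_eq : ((sinMatrix N).map (fun r => (r : ℂ)) * ZMat N z) m k
      = ∑ n ∈ Finset.Icc 1 M, f n := by
    have hIcc : ∑ n ∈ Finset.Icc 1 M, f n = ∑ i ∈ Finset.range M, f (1 + i) := by
      rw [← Finset.Ico_add_one_right_eq_Icc, Finset.sum_Ico_eq_sum_range]
      simp
    rw [Matrix.mul_apply, hIcc, ← Fin.sum_univ_eq_sum_range (fun i => f (1 + i)) M]
    apply Finset.sum_congr rfl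
    intro j _
    simp only [hf, Matrix.map_apply, sinMatrix, ZMat, Matrix.of_apply]
    congr 2
    · rw [hm']
      push_cast
      ring
    · rw [hk']
      push_cast
      ring
  -- reflection
  have f_reflect : ∀ n : ℕ, 1 ≤ n → n ≤ N → f (N - n) = f n := by
    intro n h1 h2
    have hcast : ((N - n : ℕ) : ℝ) = (N : ℝ) - n := by
      push_cast [h2]
      ring
    have hsin : Real.sin (2 * Real.pi * m' * ((N - n : ℕ) : ℝ) / N)
        = - Real.sin (2 * Real.pi * m' * n / N) := by
      rw [hcast, show 2 * Real.pi * m' * ((N : ℝ) - n) / N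
          = -(2 * Real.pi * m' * n / N) + m' * (2 * Real.pi) by field_simp; ring]
      rw [Real.sin_add_nat_mul_two_pi, Real.sin_neg]
    have hzm : (((N - n) * k' : ℕ) : ZMod N) = - ((n * k' : ℕ) : ZMod N) := by
      have hadd : (((N - n) + n : ℕ) : ZMod N) = 0 := by
        rw [Nat.sub_add_cancel h2]
        simp
      push_cast at hadd ⊢
      have : ((N - n : ℕ) : ZMod N) = - (n : ZMod N) :=
        eq_neg_of_add_eq_zero_left hadd
      rw [this]
      ring
    simp only [hf, hsin, hzm, hz]
    push_cast
    ring
  -- doubling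
  have key : ∑ n ∈ Finset.range N, f n = 2 * ∑ n ∈ Finset.Icc 1 M, f n := by
    have hf0 : f 0 = 0 := by simp [hf, hz0]
    have h1 : ∑ n ∈ Finset.range N, f n = ∑ n ∈ Finset.Ico 1 N, f n := by
      rw [Finset.range_eq_Ico, ← Finset.sum_Ico_consecutive _ (Nat.zero_le 1) (by omega : 1 ≤ N)]
      simp [hf0]
    have h2 : ∑ n ∈ Finset.Ico 1 N, f n
        = ∑ n ∈ Finset.Ico 1 (M + 1), f n + ∑ n ∈ Finset.Ico (M + 1) N, f n :=
      (Finset.sum_Ico_consecutive _ (by omega) (by omega)).symm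
    have h3 : ∑ n ∈ Finset.Ico (M + 1) N, f n = ∑ n ∈ Finset.Icc 1 (N - 1 - M), f n := by
      refine Finset.sum_nbij' (fun n => N - n) (fun n => N - n) ?_ ?_ ?_ ?_ ?_
      · intro a ha
        simp only [Finset.mem_Ico] at ha
        simp only [Finset.mem_Icc]
        omega
      · intro a ha
        simp only [Finset.mem_Icc] at ha
        simp only [Finset.mem_Ico]
        omega
      · intro a ha
        simp only [Finset.mem_Ico] at ha
        show N - (N - a) = a
        omega
      · intro a ha
        simp only [Finset.mem_Icc] at ha
        show N - (N - a) = a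
        omega
      · intro a ha
        simp only [Finset.mem_Ico] at ha
        exact (f_reflect a (by omega) (by omega)).symm
    have h4 : ∑ n ∈ Finset.Icc 1 (N - 1 - M), f n = ∑ n ∈ Finset.Icc 1 M, f n := by
      rcases (by omega : N - 1 - M = M ∨ N - 1 - M = M + 1) with h | h
      · rw [h]
      · have hNeq : N = 2 * (M + 1) := by omega
        have hfM : f (M + 1) = 0 := by
          have hsin0 : Real.sin (2 * Real.pi * (m' : ℝ) * ((M + 1 : ℕ) : ℝ) / N) = 0 := by
            have harg : 2 * Real.pi * (m' : ℝ) * ((M + 1 : ℕ) : ℝ) / N = (m' : ℝ) * Real.pi := by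
              rw [hNeq]
              push_cast
              field_simp
            rw [harg]
            exact_mod_cast Real.sin_nat_mul_pi m'
          simp only [hf, hsin0]
          simp
        rw [h, Finset.sum_Icc_succ_top (by omega), hfM, add_zero]
    rw [h1, h2, h3, h4, Finset.Ico_add_one_right_eq_Icc]
    ring
  -- regrouping
  have regroup : ∑ n ∈ Finset.range N, f n =
      ∑ i ∈ Finset.range Nd, (∑ j ∈ Finset.range d,
        ((Real.sin (2 * Real.pi * m' * i / N + j * (2 * Real.pi * m' * Nd / N)) : ℝ) : ℂ))
          * z ((i * k' : ℕ) : ZMod N) := by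
    have hsplit : ∑ n ∈ Finset.range N, f n
        = ∑ p ∈ Finset.range Nd ×ˢ Finset.range d, f (p.1 + Nd * p.2) := by
      refine Finset.sum_nbij' (fun n => (n % Nd, n / Nd)) (fun p => p.1 + Nd * p.2) ?_ ?_ ?_ ?_ ?_
      · intro n hn
        simp only [Finset.mem_range] at hn
        simp only [Finset.mem_product, Finset.mem_range]
        refine ⟨Nat.mod_lt _ hNd0, ?_⟩
        rw [Nat.div_lt_iff_lt_mul hNd0]
        have h3 : Nd * d = N := by rw [mul_comm]; exact hNd
        have h4 := hNd
        omega
      · intro p hp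
        simp only [Finset.mem_product, Finset.mem_range] at hp
        simp only [Finset.mem_range]
        have h1 : Nd * (p.2 + 1) ≤ Nd * d := Nat.mul_le_mul_left _ (by omega)
        have h2 : Nd * (p.2 + 1) = Nd * p.2 + Nd := by ring
        have h3 : Nd * d = N := by rw [mul_comm]; exact hNd
        omega
      · intro n _
        exact Nat.mod_add_div n Nd
      · intro p hp
        simp only [Finset.mem_product, Finset.mem_range] at hp
        have e1 : (p.1 + Nd * p.2) % Nd = p.1 := by
          rw [Nat.add_mul_mod_self_left]
          exact Nat.mod_eq_of_lt hp.1
        have e2 : (p.1 + Nd * p.2) / Nd = p.2 := by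
          rw [Nat.add_mul_div_left _ _ hNd0, Nat.div_eq_of_lt hp.1, zero_add]
        exact Prod.ext e1 e2
      · intro n _
        show f n = f (n % Nd + Nd * (n / Nd))
        rw [Nat.mod_add_div]
    rw [hsplit, Finset.sum_product]
    apply Finset.sum_congr rfl
    intro i _
    rw [Finset.sum_mul]
    apply Finset.sum_congr rfl
    intro j _
    simp only [hf]
    congr 2
    · push_cast
      field_simp
    · obtain ⟨c, hc⟩ := hdvdk
      have hnat : (i + Nd * j) * k' = i * k' + N * (j * c) := by
        rw [hc, ← hNd]
        ring
      rw [hnat]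
      push_cast
      simp
  constructor
  · -- vanishing case
    intro hnotdvd
    have hinner : ∀ i : ℕ, ∑ j ∈ Finset.range d,
        ((Real.sin (2 * Real.pi * m' * i / N + j * (2 * Real.pi * m' * Nd / N)) : ℝ) : ℂ) = 0 := by
      intro i
      apply sum_sin_eq_zero'
      · intro hcon
        obtain ⟨n, hn⟩ := Complex.exp_eq_one_iff.mp hcon
        have hb : ((2 * Real.pi * m' * Nd / N : ℝ) : ℂ) = n * (2 * Real.pi) := by
          have h' : ((2 * Real.pi * m' * Nd / N : ℝ) : ℂ) * Complex.I
              = ((n : ℂ) * (2 * Real.pi)) * Complex.I := by rw [hn]; ring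
          exact mul_right_cancel₀ Complex.I_ne_zero h'
        have hbr : 2 * Real.pi * (m' : ℝ) * Nd / N = n * (2 * Real.pi) := by
          exact_mod_cast hb
        rw [hNcast] at hbr
        have h2pi : (2 * Real.pi) ≠ 0 := by positivity
        have hbr' : ((m' : ℝ) / d) * (2 * Real.pi) = (n : ℝ) * (2 * Real.pi) := by
          rw [← hbr]
          field_simp
        have hdiv : (m' : ℝ) / d = n := mul_right_cancel₀ h2pi hbr'
        have hm'n : (m' : ℝ) = n * d := by
          field_simp at hdiv
          linarith [hdiv]
        have : (m' : ℤ) = n * d := by exact_mod_cast hm'n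
        exact hnotdvd (by
          have hdvd : (d : ℤ) ∣ (m' : ℤ) := ⟨n, by rw [this]; ring⟩
          exact_mod_cast hdvd)
      · rw [← Complex.exp_nat_mul]
        have harg : (d : ℂ) * (((2 * Real.pi * m' * Nd / N : ℝ) : ℂ) * Complex.I)
            = ((m' : ℤ) : ℂ) * (2 * Real.pi * Complex.I) := by
          push_cast
          have hNc : (N : ℂ) = (d : ℂ) * Nd := by exact_mod_cast hNd.symm
          rw [hNc]
          have hdc : (d : ℂ) ≠ 0 := Nat.cast_ne_zero.mpr hd0.ne'
          have hNdc : (Nd : ℂ) ≠ 0 := Nat.cast_ne_zero.mpr hNd0.ne'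
          field_simp
        rw [harg]
        exact Complex.exp_int_mul_two_pi_mul_I (m' : ℤ)
    have hzero : ∑ n ∈ Finset.range N, f n = 0 := by
      rw [regroup]
      apply Finset.sum_eq_zero
      intro i _
      rw [hinner i, zero_mul]
    rw [key] at hzero
    rw [entry_eq]
    have := mul_eq_zero.mp hzero
    rcases this with h | h
    · exact absurd h two_ne_zero
    · exact h
  · -- main case
    intro u v hu hv t ht
    have hveq : k' / d = v := by rw [hv]; exact Nat.mul_div_cancel_left v hd0
    have hcop : Nat.Coprime v Nd := by
      have h := Nat.coprime_div_gcd_div_gcd (m := k') (n := N) hd0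
      rwa [← hd, hveq, ← hNddef] at h
    have hm'c : (m' : ℝ) = (d : ℝ) * u := by exact_mod_cast hu
    have hexp1 : Complex.exp (((2 * Real.pi * m' * Nd / N : ℝ) : ℂ) * Complex.I) = 1 := by
      have hbu : (2 * Real.pi * (m' : ℝ) * Nd / N) = (u : ℝ) * (2 * Real.pi) := by
        rw [hNcast, hm'c]
        field_simp
      rw [hbu]
      have : (((u : ℝ) * (2 * Real.pi) : ℝ) : ℂ) * Complex.I
          = ((u : ℤ) : ℂ) * (2 * Real.pi * Complex.I) := by push_cast; ring
      rw [this]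
      exact Complex.exp_int_mul_two_pi_mul_I (u : ℤ)
    have hsum : ∑ n ∈ Finset.range N, f n
        = (d : ℂ) * ∑ i ∈ Finset.range Nd,
            ((Real.sin (2 * Real.pi * u * i / Nd) : ℝ) : ℂ) * z ((i * k' : ℕ) : ZMod N) := by
      rw [regroup, Finset.mul_sum]
      apply Finset.sum_congr rfl
      intro i _
      rw [sum_sin_eq_const _ _ d hexp1]
      have hsin : Real.sin (2 * Real.pi * m' * i / N) = Real.sin (2 * Real.pi * u * i / Nd) := by
        congr 1
        rw [hNcast, hm'c]
        field_simp
      rw [hsin]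
      push_cast
      ring
    set G : ZMod Nd → ℂ := fun s =>
      ((Real.sin (2 * Real.pi * ((t * s : ZMod Nd)).val / Nd) : ℝ) : ℂ)
        * z (((d * (ZMod.val s) : ℕ) : ZMod N)) with hG
    have hA : ∑ i ∈ Finset.range Nd,
        ((Real.sin (2 * Real.pi * u * i / Nd) : ℝ) : ℂ) * z ((i * k' : ℕ) : ZMod N)
        = ∑ s : ZMod Nd, G s := by
      set e : (ZMod Nd)ˣ := ZMod.unitOfCoprime v hcop with he
      have hev : ((e : ZMod Nd)) = (v : ZMod Nd) := ZMod.coe_unitOfCoprime v hcop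
      have hsum2 : ∑ s : ZMod Nd, G s = ∑ s : ZMod Nd, G ((e : ZMod Nd) * s) :=
        (Fintype.sum_bijective (fun s => (e : ZMod Nd) * s) (Units.mulLeft_bijective e)
          (fun s => G ((e : ZMod Nd) * s)) G (fun s => rfl)).symm
      rw [hsum2, zmod_sum_range (fun s => G ((e : ZMod Nd) * s))]
      apply Finset.sum_congr rfl
      intro i _
      have harg : (e : ZMod Nd) * (i : ZMod Nd) = ((v * i : ℕ) : ZMod Nd) := by
        rw [hev]; push_cast; ring
      have h1 : t * ((v * i : ℕ) : ZMod Nd) = ((u * i : ℕ) : ZMod Nd) := by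
        push_cast
        calc t * ((v : ZMod Nd) * (i : ZMod Nd)) = ((v : ZMod Nd) * t) * i := by ring
        _ = (u : ZMod Nd) * i := by rw [ht]
      simp only [hG, harg, h1]
      rw [sin_val_natCast Nd (u * i), cast_d_mul N d Nd hNd (v * i)]
      have hzarg : ((d * (v * i) : ℕ) : ZMod N) = ((i * k' : ℕ) : ZMod N) := by
        congr 1
        rw [hv]
        ring
      rw [hzarg]
      congr 2
      push_cast
      ring
    have hB : ∑ s : ZMod Nd, G s = ∑ r ∈ Finset.Icc 1 Nd,
        z (((d * r : ℕ) : ZMod N))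
          * ((Real.sin (2 * Real.pi * (ZMod.val t) * r / Nd) : ℝ) : ℂ) := by
      set hfun : ℕ → ℂ := fun r =>
        z (((d * r : ℕ) : ZMod N))
          * ((Real.sin (2 * Real.pi * (ZMod.val t) * r / Nd) : ℝ) : ℂ) with hhfun
      have hterm : ∀ i : ℕ, G (i : ZMod Nd) = hfun i := by
        intro i
        have h1 : t * (i : ZMod Nd) = ((ZMod.val t * i : ℕ) : ZMod Nd) := by
          push_cast
          rw [ZMod.natCast_val, ZMod.cast_id]
        simp only [hG, hhfun, h1]
        rw [sin_val_natCast Nd (ZMod.val t * i), cast_d_mul N d Nd hNd i]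
        push_cast
        ring
      rw [zmod_sum_range G]
      have e0 : ∑ i ∈ Finset.range Nd, G (i : ZMod Nd) = ∑ i ∈ Finset.range Nd, hfun i :=
        Finset.sum_congr rfl (fun i _ => hterm i)
      rw [e0]
      have hb0 : hfun 0 = 0 := by simp [hhfun]
      have hbN : hfun Nd = 0 := by
        have hsin0 : Real.sin (2 * Real.pi * ((ZMod.val t : ℕ) : ℝ) * ((Nd : ℕ) : ℝ) / ((Nd : ℕ) : ℝ)) = 0 := by
          have harg : 2 * Real.pi * ((ZMod.val t : ℕ) : ℝ) * ((Nd : ℕ) : ℝ) / ((Nd : ℕ) : ℝ)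
              = ((2 * ZMod.val t : ℕ) : ℝ) * Real.pi := by
            push_cast
            field_simp
          rw [harg]
          exact Real.sin_nat_mul_pi (2 * ZMod.val t)
        simp only [hhfun, hsin0]
        simp
      have e1 := Finset.sum_range_succ hfun Nd
      have e2 := Finset.sum_range_succ' hfun Nd
      have e3 : ∑ r ∈ Finset.Icc 1 Nd, hfun r = ∑ i ∈ Finset.range Nd, hfun (1 + i) := by
        rw [← Finset.Ico_add_one_right_eq_Icc, Finset.sum_Ico_eq_sum_range]
        simp
      have e4 : ∑ i ∈ Finset.range Nd, hfun (1 + i) = ∑ i ∈ Finset.range Nd, hfun (i + 1) := by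
        apply Finset.sum_congr rfl
        intro i _
        rw [add_comm]
      rw [e3, e4]
      linear_combination e2 - e1 + hb0 - hbN
    -- final assembly
    rw [entry_eq]
    have h2entry : (2 : ℂ) * ∑ n ∈ Finset.Icc 1 M, f n
        = 2 * ((d : ℂ) * zhat N d z t) := by
      have hzhat : zhat N d z t = (1 / 2 : ℂ) * ∑ r ∈ Finset.Icc 1 Nd,
          z (((d * r : ℕ) : ZMod N)) *
            ((Real.sin (2 * Real.pi * (ZMod.val t) * r / ((Nd : ℕ) : ℝ)) : ℝ) : ℂ) := rfl
      rw [← key, hsum, hA, hB, hzhat]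
      rw [Finset.mul_sum, Finset.mul_sum, Finset.mul_sum, Finset.mul_sum]
      apply Finset.sum_congr rfl
      intro r _
      ring
    exact mul_left_cancel₀ two_ne_zero h2entry
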